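/- arXiv:1510.03998 — 2 statements merged into one kernel-verified Lean document; each statement's English description precedes it below -/
import Mathlib

section
/- For every interval graph G, ν(G_γ) ≤ ν(G_α). -/
open Set

/-- An interval representation of a simple graph `G`: each vertex `v` gets a nonempty
closed interval `[l v, r v] ⊆ ℝ`, and two distinct vertices are adjacent iff their
intervals intersect. -/
structure IntervalRep {V : Type*} (G : SimpleGraph V) where
  l : V → ℝ
  r : V → ℝ
  le : ∀ v, l v ≤ r v
  adj_iff : ∀ u v : V, u ≠ v →
    (G.Adj u v ↔ (Icc (l u) (r u) ∩ Icc (l v) (r v)).Nonempty)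

namespace IntervalRep

variable {V : Type*} {G : SimpleGraph V}

/-- The interval of a vertex. -/
def itv (R : IntervalRep G) (v : V) : Set ℝ := Icc (R.l v) (R.r v)

/-- The nesting `ν(R)`: the maximum length of a chain of strictly nested vertex intervals. -/
noncomputable def nesting (R : IntervalRep G) : ℕ :=
  sSup {k : ℕ | ∃ f : Fin k → V, ∀ i j : Fin k, i < j → R.itv (f i) ⊂ R.itv (f j)}

/-- `ν_R(x)`: the maximum length of a chain of strictly nested vertex intervals whose
outermost interval is `I(x)` (counting `x` itself). -/
noncomputable def nuAt (R : IntervalRep G) (x : V) : ℕ :=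
  sSup {k : ℕ | ∃ f : Fin k → V,
    (∀ i j : Fin k, i < j → R.itv (f i) ⊂ R.itv (f j)) ∧
    ∃ h : 0 < k, f ⟨k - 1, by omega⟩ = x}

end IntervalRep

/-- A graph is an interval graph if it admits an interval representation. -/
def IsIntervalGraph {V : Type*} (G : SimpleGraph V) : Prop := Nonempty (IntervalRep G)

/-- The nesting number `ν(G)`: the minimum nesting over all interval representations. -/
noncomputable def nu {V : Type*} (G : SimpleGraph V) : ℕ :=
  sInf {n : ℕ | ∃ R : IntervalRep G, R.nesting = n}

/-- `G_α`: add vertices `u, a₁, a₂, b₁, b₂` (coded as `0,1,2,3,4`), with `u` adjacent to all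
of `G` and to `a₁, b₁`; `a₁ ~ a₂` and `b₁ ~ b₂`. -/
def Galpha {V : Type*} (G : SimpleGraph V) : SimpleGraph (V ⊕ Fin 5) :=
  SimpleGraph.fromRel fun x y =>
    match x, y with
    | Sum.inl a, Sum.inl b => G.Adj a b
    | Sum.inl _, Sum.inr i => i = 0
    | Sum.inr _, Sum.inl _ => False
    | Sum.inr i, Sum.inr j =>
        i = 0 ∧ j = 1 ∨ i = 1 ∧ j = 2 ∨ i = 0 ∧ j = 3 ∨ i = 3 ∧ j = 4

/-- `G_β`: add vertices `u, a₁, a₂` (coded as `0,1,2`), with `u` adjacent to all of `G`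
and to `a₁`; `a₁ ~ a₂`. -/
def Gbeta {V : Type*} (G : SimpleGraph V) : SimpleGraph (V ⊕ Fin 3) :=
  SimpleGraph.fromRel fun x y =>
    match x, y with
    | Sum.inl a, Sum.inl b => G.Adj a b
    | Sum.inl _, Sum.inr i => i = 0
    | Sum.inr _, Sum.inl _ => False
    | Sum.inr i, Sum.inr j => i = 0 ∧ j = 1 ∨ i = 1 ∧ j = 2

/-- `G_γ`: add vertices `u, v, a₁, a₂, b₁, b₂` (coded as `0,1,2,3,4,5`), with `u ~ v`, both
adjacent to all of `G`; `u ~ a₁`, `a₁ ~ a₂`, `v ~ b₁`, `b₁ ~ b₂`. -/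
def Ggamma {V : Type*} (G : SimpleGraph V) : SimpleGraph (V ⊕ Fin 6) :=
  SimpleGraph.fromRel fun x y =>
    match x, y with
    | Sum.inl a, Sum.inl b => G.Adj a b
    | Sum.inl _, Sum.inr i => i = 0 ∨ i = 1
    | Sum.inr _, Sum.inl _ => False
    | Sum.inr i, Sum.inr j =>
        i = 0 ∧ j = 1 ∨ i = 0 ∧ j = 2 ∨ i = 2 ∧ j = 3 ∨ i = 1 ∧ j = 4 ∨ i = 4 ∧ j = 5

/-- The disjoint union of a family of graphs, on the sigma type of their vertex sets. -/
def sigmaGraph {p : ℕ} {V : Fin p → Type*} (G : ∀ i, SimpleGraph (V i)) :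
    SimpleGraph (Σ i, V i) :=
  SimpleGraph.fromRel fun x y => ∃ h : x.1 = y.1, (G y.1).Adj (h ▸ x.2) y.2

/-- The graph obtained from `H` by adding one new vertex adjacent to every vertex of `H`. -/
def joinVertex {W : Type*} (H : SimpleGraph W) : SimpleGraph (W ⊕ Unit) :=
  SimpleGraph.fromRel fun x y =>
    match x, y with
    | Sum.inl a, Sum.inl b => H.Adj a b
    | Sum.inl _, Sum.inr _ => True
    | _, _ => False

section Stmt6Aux
variable {V : Type*} {G : SimpleGraph V}

/-- restriction of a rep of `Galpha G` to `G`. -/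
def restrictAlpha (R : IntervalRep (Galpha G)) : IntervalRep G where
  l v := R.l (Sum.inl v)
  r v := R.r (Sum.inl v)
  le v := R.le _
  adj_iff a b hab := by
    rw [show G.Adj a b ↔ (Galpha G).Adj (Sum.inl a) (Sum.inl b) by
      simp [Galpha, SimpleGraph.fromRel_adj, hab]
      intro h; exact (G.adj_symm h)]
    exact R.adj_iff _ _ (by simp [hab])

/-- the explicit rep of `Galpha G` built from a rep of `G`. -/
def alphaRep (R : IntervalRep G) (m M : ℝ) (hm : ∀ v, m ≤ R.l v) (hM : ∀ v, R.r v ≤ M)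
    (hmM : m ≤ M) : IntervalRep (Galpha G) where
  l := Sum.elim R.l ![m-2, m-3, m-4, M+2, M+3]
  r := Sum.elim R.r ![M+2, m-2, m-3, M+3, M+4]
  le v := by
    rcases v with v | i
    · exact R.le v
    · fin_cases i <;> simp <;> linarith
  adj_iff x y hxy := by
    have hIcc : ∀ p q p' q' : ℝ, p ≤ q → p' ≤ q' → q < p' →
        Icc p q ∩ Icc p' q' = ∅ := by
      intro p q p' q' h h' hlt
      apply eq_empty_iff_forall_notMem.2
      rintro z ⟨⟨hz1, hz2⟩, hz3, hz4⟩
      linarith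
    rcases x with a | i <;> rcases y with b | j
    · rw [show (Galpha G).Adj (Sum.inl a) (Sum.inl b) ↔ G.Adj a b by
        simp [Galpha, SimpleGraph.fromRel_adj, (by simpa using hxy : a ≠ b)]
        intro h; exact (G.adj_symm h)]
      exact R.adj_iff a b (by simpa using hxy)
    · fin_cases j
      · refine iff_of_true (by simp [Galpha, SimpleGraph.fromRel_adj]) ?_
        exact ⟨R.l a, ⟨le_refl _, R.le a⟩, by simp; constructor <;> linarith [hm a, hM a, R.le a]⟩
      · refine iff_of_false (by simp [Galpha, SimpleGraph.fromRel_adj]) ?_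
        rw [Set.not_nonempty_iff_eq_empty]
        rw [inter_comm]
        exact hIcc _ _ _ _ (by simp; linarith [hm a, hM a, R.le a]) (by simp; linarith [hm a, hM a, R.le a]) (by simp; linarith [hm a, hM a, R.le a])
      · refine iff_of_false (by simp [Galpha, SimpleGraph.fromRel_adj]) ?_
        rw [Set.not_nonempty_iff_eq_empty]
        rw [inter_comm]
        exact hIcc _ _ _ _ (by simp; linarith [hm a, hM a, R.le a]) (by simp; linarith [hm a, hM a, R.le a]) (by simp; linarith [hm a, hM a, R.le a])
      · refine iff_of_false (by simp [Galpha, SimpleGraph.fromRel_adj]) ?_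
        rw [Set.not_nonempty_iff_eq_empty]
        exact hIcc _ _ _ _ (by simp; linarith [hm a, hM a, R.le a]) (by simp; linarith [hm a, hM a, R.le a]) (by simp; linarith [hm a, hM a, R.le a])
      · refine iff_of_false (by simp [Galpha, SimpleGraph.fromRel_adj]) ?_
        rw [Set.not_nonempty_iff_eq_empty]
        exact hIcc _ _ _ _ (by simp; linarith [hm a, hM a, R.le a]) (by simp; linarith [hm a, hM a, R.le a]) (by simp; linarith [hm a, hM a, R.le a])
    · fin_cases i
      · refine iff_of_true (by simp [Galpha, SimpleGraph.fromRel_adj]) ?_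
        exact ⟨R.l b, by simp; constructor <;> linarith [hm b, hM b, R.le b], ⟨le_refl _, R.le b⟩⟩
      · refine iff_of_false (by simp [Galpha, SimpleGraph.fromRel_adj]) ?_
        rw [Set.not_nonempty_iff_eq_empty]
        exact hIcc _ _ _ _ (by simp; linarith [hm b, hM b, R.le b]) (by simp; linarith [hm b, hM b, R.le b]) (by simp; linarith [hm b, hM b, R.le b])
      · refine iff_of_false (by simp [Galpha, SimpleGraph.fromRel_adj]) ?_
        rw [Set.not_nonempty_iff_eq_empty]
        exact hIcc _ _ _ _ (by simp; linarith [hm b, hM b, R.le b]) (by simp; linarith [hm b, hM b, R.le b]) (by simp; linarith [hm b, hM b, R.le b])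
      · refine iff_of_false (by simp [Galpha, SimpleGraph.fromRel_adj]) ?_
        rw [Set.not_nonempty_iff_eq_empty]
        rw [inter_comm]
        exact hIcc _ _ _ _ (by simp; linarith [hm b, hM b, R.le b]) (by simp; linarith [hm b, hM b, R.le b]) (by simp; linarith [hm b, hM b, R.le b])
      · refine iff_of_false (by simp [Galpha, SimpleGraph.fromRel_adj]) ?_
        rw [Set.not_nonempty_iff_eq_empty]
        rw [inter_comm]
        exact hIcc _ _ _ _ (by simp; linarith [hm b, hM b, R.le b]) (by simp; linarith [hm b, hM b, R.le b]) (by simp; linarith [hm b, hM b, R.le b])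
    · fin_cases i <;> fin_cases j
      · exact absurd rfl hxy
      · refine iff_of_true (by simp [Galpha, SimpleGraph.fromRel_adj]) ?_
        exact ⟨m-2, by simp; constructor <;> linarith⟩
      · refine iff_of_false (by simp [Galpha, SimpleGraph.fromRel_adj]) ?_
        rw [Set.not_nonempty_iff_eq_empty]
        rw [inter_comm]
        exact hIcc _ _ _ _ (by simp; linarith) (by simp; linarith) (by simp; linarith)
      · refine iff_of_true (by simp [Galpha, SimpleGraph.fromRel_adj]) ?_
        exact ⟨M+2, by simp; constructor <;> linarith⟩
      · refine iff_of_false (by simp [Galpha, SimpleGraph.fromRel_adj]) ?_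
        rw [Set.not_nonempty_iff_eq_empty]
        exact hIcc _ _ _ _ (by simp; linarith) (by simp; linarith) (by simp; linarith)
      · refine iff_of_true (by simp [Galpha, SimpleGraph.fromRel_adj]) ?_
        exact ⟨m-2, by simp; constructor <;> linarith⟩
      · exact absurd rfl hxy
      · refine iff_of_true (by simp [Galpha, SimpleGraph.fromRel_adj]) ?_
        exact ⟨m-3, by simp; constructor <;> linarith⟩
      · refine iff_of_false (by simp [Galpha, SimpleGraph.fromRel_adj]) ?_
        rw [Set.not_nonempty_iff_eq_empty]
        exact hIcc _ _ _ _ (by simp; linarith) (by simp; linarith) (by simp; linarith)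
      · refine iff_of_false (by simp [Galpha, SimpleGraph.fromRel_adj]) ?_
        rw [Set.not_nonempty_iff_eq_empty]
        exact hIcc _ _ _ _ (by simp; linarith) (by simp; linarith) (by simp; linarith)
      · refine iff_of_false (by simp [Galpha, SimpleGraph.fromRel_adj]) ?_
        rw [Set.not_nonempty_iff_eq_empty]
        exact hIcc _ _ _ _ (by simp; linarith) (by simp; linarith) (by simp; linarith)
      · refine iff_of_true (by simp [Galpha, SimpleGraph.fromRel_adj]) ?_
        exact ⟨m-3, by simp; constructor <;> linarith⟩
      · exact absurd rfl hxy
      · refine iff_of_false (by simp [Galpha, SimpleGraph.fromRel_adj]) ?_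
        rw [Set.not_nonempty_iff_eq_empty]
        exact hIcc _ _ _ _ (by simp; linarith) (by simp; linarith) (by simp; linarith)
      · refine iff_of_false (by simp [Galpha, SimpleGraph.fromRel_adj]) ?_
        rw [Set.not_nonempty_iff_eq_empty]
        exact hIcc _ _ _ _ (by simp; linarith) (by simp; linarith) (by simp; linarith)
      · refine iff_of_true (by simp [Galpha, SimpleGraph.fromRel_adj]) ?_
        exact ⟨M+2, by simp; constructor <;> linarith⟩
      · refine iff_of_false (by simp [Galpha, SimpleGraph.fromRel_adj]) ?_
        rw [Set.not_nonempty_iff_eq_empty]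
        rw [inter_comm]
        exact hIcc _ _ _ _ (by simp; linarith) (by simp; linarith) (by simp; linarith)
      · refine iff_of_false (by simp [Galpha, SimpleGraph.fromRel_adj]) ?_
        rw [Set.not_nonempty_iff_eq_empty]
        rw [inter_comm]
        exact hIcc _ _ _ _ (by simp; linarith) (by simp; linarith) (by simp; linarith)
      · exact absurd rfl hxy
      · refine iff_of_true (by simp [Galpha, SimpleGraph.fromRel_adj]) ?_
        exact ⟨M+3, by simp; constructor <;> linarith⟩
      · refine iff_of_false (by simp [Galpha, SimpleGraph.fromRel_adj]) ?_
        rw [Set.not_nonempty_iff_eq_empty]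
        rw [inter_comm]
        exact hIcc _ _ _ _ (by simp; linarith) (by simp; linarith) (by simp; linarith)
      · refine iff_of_false (by simp [Galpha, SimpleGraph.fromRel_adj]) ?_
        rw [Set.not_nonempty_iff_eq_empty]
        rw [inter_comm]
        exact hIcc _ _ _ _ (by simp; linarith) (by simp; linarith) (by simp; linarith)
      · refine iff_of_false (by simp [Galpha, SimpleGraph.fromRel_adj]) ?_
        rw [Set.not_nonempty_iff_eq_empty]
        rw [inter_comm]
        exact hIcc _ _ _ _ (by simp; linarith) (by simp; linarith) (by simp; linarith)
      · refine iff_of_true (by simp [Galpha, SimpleGraph.fromRel_adj]) ?_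
        exact ⟨M+3, by simp; constructor <;> linarith⟩
      · exact absurd rfl hxy

def gammaRep (R : IntervalRep G) (m M : ℝ) (hm : ∀ v, m ≤ R.l v) (hM : ∀ v, R.r v ≤ M)
    (hmM : m ≤ M) : IntervalRep (Ggamma G) where
  l := Sum.elim R.l ![m-2, m, m-3, m-4, M+2, M+3]
  r := Sum.elim R.r ![M, M+2, m-2, m-3, M+3, M+4]
  le v := by
    rcases v with v | i
    · exact R.le v
    · have hL5 : (![m-2, m, m-3, m-4, M+2, M+3] : Fin 6 → ℝ) 5 = M+3 := rfl
      have hR5 : (![M, M+2, m-2, m-3, M+3, M+4] : Fin 6 → ℝ) 5 = M+4 := rfl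
      fin_cases i <;> simp [hL5, hR5] <;> linarith
  adj_iff x y hxy := by
    have hL5 : (![m-2, m, m-3, m-4, M+2, M+3] : Fin 6 → ℝ) 5 = M+3 := rfl
    have hR5 : (![M, M+2, m-2, m-3, M+3, M+4] : Fin 6 → ℝ) 5 = M+4 := rfl
    have hIcc : ∀ p q p' q' : ℝ, p ≤ q → p' ≤ q' → q < p' →
        Icc p q ∩ Icc p' q' = ∅ := by
      intro p q p' q' h h' hlt
      apply eq_empty_iff_forall_notMem.2
      rintro z ⟨⟨hz1, hz2⟩, hz3, hz4⟩
      linarith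
    rcases x with a | i <;> rcases y with b | j
    · rw [show (Ggamma G).Adj (Sum.inl a) (Sum.inl b) ↔ G.Adj a b by
        simp [Ggamma, SimpleGraph.fromRel_adj, (by simpa using hxy : a ≠ b)]
        intro h; exact (G.adj_symm h)]
      exact R.adj_iff a b (by simpa using hxy)
    · fin_cases j
      · refine iff_of_true (by simp [Ggamma, SimpleGraph.fromRel_adj]) ?_
        exact ⟨R.l a, ⟨le_refl _, R.le a⟩, by simp [hL5, hR5]; constructor <;> linarith [hm a, hM a, R.le a]⟩
      · refine iff_of_true (by simp [Ggamma, SimpleGraph.fromRel_adj]) ?_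
        exact ⟨R.l a, ⟨le_refl _, R.le a⟩, by simp [hL5, hR5]; constructor <;> linarith [hm a, hM a, R.le a]⟩
      · refine iff_of_false (by simp [Ggamma, SimpleGraph.fromRel_adj]) ?_
        rw [Set.not_nonempty_iff_eq_empty]
        rw [inter_comm]
        exact hIcc _ _ _ _ (by simp [hL5, hR5]; linarith [hm a, hM a, R.le a]) (by simp [hL5, hR5]; linarith [hm a, hM a, R.le a]) (by simp [hL5, hR5]; linarith [hm a, hM a, R.le a])
      · refine iff_of_false (by simp [Ggamma, SimpleGraph.fromRel_adj]) ?_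
        rw [Set.not_nonempty_iff_eq_empty]
        rw [inter_comm]
        exact hIcc _ _ _ _ (by simp [hL5, hR5]; linarith [hm a, hM a, R.le a]) (by simp [hL5, hR5]; linarith [hm a, hM a, R.le a]) (by simp [hL5, hR5]; linarith [hm a, hM a, R.le a])
      · refine iff_of_false (by simp [Ggamma, SimpleGraph.fromRel_adj]) ?_
        rw [Set.not_nonempty_iff_eq_empty]
        exact hIcc _ _ _ _ (by simp [hL5, hR5]; linarith [hm a, hM a, R.le a]) (by simp [hL5, hR5]; linarith [hm a, hM a, R.le a]) (by simp [hL5, hR5]; linarith [hm a, hM a, R.le a])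
      · refine iff_of_false (by simp [Ggamma, SimpleGraph.fromRel_adj]) ?_
        rw [Set.not_nonempty_iff_eq_empty]
        exact hIcc _ _ _ _ (by simp [hL5, hR5]; linarith [hm a, hM a, R.le a]) (by simp [hL5, hR5]; linarith [hm a, hM a, R.le a]) (by simp [hL5, hR5]; linarith [hm a, hM a, R.le a])
    · fin_cases i
      · refine iff_of_true (by simp [Ggamma, SimpleGraph.fromRel_adj]) ?_
        exact ⟨R.l b, by simp [hL5, hR5]; constructor <;> linarith [hm b, hM b, R.le b], ⟨le_refl _, R.le b⟩⟩
      · refine iff_of_true (by simp [Ggamma, SimpleGraph.fromRel_adj]) ?_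
        exact ⟨R.l b, by simp [hL5, hR5]; constructor <;> linarith [hm b, hM b, R.le b], ⟨le_refl _, R.le b⟩⟩
      · refine iff_of_false (by simp [Ggamma, SimpleGraph.fromRel_adj]) ?_
        rw [Set.not_nonempty_iff_eq_empty]
        exact hIcc _ _ _ _ (by simp [hL5, hR5]; linarith [hm b, hM b, R.le b]) (by simp [hL5, hR5]; linarith [hm b, hM b, R.le b]) (by simp [hL5, hR5]; linarith [hm b, hM b, R.le b])
      · refine iff_of_false (by simp [Ggamma, SimpleGraph.fromRel_adj]) ?_
        rw [Set.not_nonempty_iff_eq_empty]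
        exact hIcc _ _ _ _ (by simp [hL5, hR5]; linarith [hm b, hM b, R.le b]) (by simp [hL5, hR5]; linarith [hm b, hM b, R.le b]) (by simp [hL5, hR5]; linarith [hm b, hM b, R.le b])
      · refine iff_of_false (by simp [Ggamma, SimpleGraph.fromRel_adj]) ?_
        rw [Set.not_nonempty_iff_eq_empty]
        rw [inter_comm]
        exact hIcc _ _ _ _ (by simp [hL5, hR5]; linarith [hm b, hM b, R.le b]) (by simp [hL5, hR5]; linarith [hm b, hM b, R.le b]) (by simp [hL5, hR5]; linarith [hm b, hM b, R.le b])
      · refine iff_of_false (by simp [Ggamma, SimpleGraph.fromRel_adj]) ?_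
        rw [Set.not_nonempty_iff_eq_empty]
        rw [inter_comm]
        exact hIcc _ _ _ _ (by simp [hL5, hR5]; linarith [hm b, hM b, R.le b]) (by simp [hL5, hR5]; linarith [hm b, hM b, R.le b]) (by simp [hL5, hR5]; linarith [hm b, hM b, R.le b])
    · fin_cases i <;> fin_cases j
      · exact absurd rfl hxy
      · refine iff_of_true (by simp [Ggamma, SimpleGraph.fromRel_adj]) ?_
        exact ⟨m, by simp [hL5, hR5]; constructor <;> linarith⟩
      · refine iff_of_true (by simp [Ggamma, SimpleGraph.fromRel_adj]) ?_
        exact ⟨m-2, by simp [hL5, hR5]; constructor <;> linarith⟩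
      · refine iff_of_false (by simp [Ggamma, SimpleGraph.fromRel_adj]) ?_
        rw [Set.not_nonempty_iff_eq_empty]
        rw [inter_comm]
        exact hIcc _ _ _ _ (by simp [hL5, hR5]; try linarith) (by simp [hL5, hR5]; try linarith) (by simp [hL5, hR5]; try linarith)
      · refine iff_of_false (by simp [Ggamma, SimpleGraph.fromRel_adj]) ?_
        rw [Set.not_nonempty_iff_eq_empty]
        exact hIcc _ _ _ _ (by simp [hL5, hR5]; try linarith) (by simp [hL5, hR5]; try linarith) (by simp [hL5, hR5]; try linarith)
      · refine iff_of_false (by simp [Ggamma, SimpleGraph.fromRel_adj]) ?_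
        rw [Set.not_nonempty_iff_eq_empty]
        exact hIcc _ _ _ _ (by simp [hL5, hR5]; try linarith) (by simp [hL5, hR5]; try linarith) (by simp [hL5, hR5]; try linarith)
      · refine iff_of_true (by simp [Ggamma, SimpleGraph.fromRel_adj]) ?_
        exact ⟨m, by simp [hL5, hR5]; constructor <;> linarith⟩
      · exact absurd rfl hxy
      · refine iff_of_false (by simp [Ggamma, SimpleGraph.fromRel_adj]) ?_
        rw [Set.not_nonempty_iff_eq_empty]
        rw [inter_comm]
        exact hIcc _ _ _ _ (by simp [hL5, hR5]; try linarith) (by simp [hL5, hR5]; try linarith) (by simp [hL5, hR5]; try linarith)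
      · refine iff_of_false (by simp [Ggamma, SimpleGraph.fromRel_adj]) ?_
        rw [Set.not_nonempty_iff_eq_empty]
        rw [inter_comm]
        exact hIcc _ _ _ _ (by simp [hL5, hR5]; try linarith) (by simp [hL5, hR5]; try linarith) (by simp [hL5, hR5]; try linarith)
      · refine iff_of_true (by simp [Ggamma, SimpleGraph.fromRel_adj]) ?_
        exact ⟨M+2, by simp [hL5, hR5]; constructor <;> linarith⟩
      · refine iff_of_false (by simp [Ggamma, SimpleGraph.fromRel_adj]) ?_
        rw [Set.not_nonempty_iff_eq_empty]
        exact hIcc _ _ _ _ (by simp [hL5, hR5]; try linarith) (by simp [hL5, hR5]; try linarith) (by simp [hL5, hR5]; try linarith)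
      · refine iff_of_true (by simp [Ggamma, SimpleGraph.fromRel_adj]) ?_
        exact ⟨m-2, by simp [hL5, hR5]; constructor <;> linarith⟩
      · refine iff_of_false (by simp [Ggamma, SimpleGraph.fromRel_adj]) ?_
        rw [Set.not_nonempty_iff_eq_empty]
        exact hIcc _ _ _ _ (by simp [hL5, hR5]; try linarith) (by simp [hL5, hR5]; try linarith) (by simp [hL5, hR5]; try linarith)
      · exact absurd rfl hxy
      · refine iff_of_true (by simp [Ggamma, SimpleGraph.fromRel_adj]) ?_
        exact ⟨m-3, by simp [hL5, hR5]; constructor <;> linarith⟩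
      · refine iff_of_false (by simp [Ggamma, SimpleGraph.fromRel_adj]) ?_
        rw [Set.not_nonempty_iff_eq_empty]
        exact hIcc _ _ _ _ (by simp [hL5, hR5]; try linarith) (by simp [hL5, hR5]; try linarith) (by simp [hL5, hR5]; try linarith)
      · refine iff_of_false (by simp [Ggamma, SimpleGraph.fromRel_adj]) ?_
        rw [Set.not_nonempty_iff_eq_empty]
        exact hIcc _ _ _ _ (by simp [hL5, hR5]; try linarith) (by simp [hL5, hR5]; try linarith) (by simp [hL5, hR5]; try linarith)
      · refine iff_of_false (by simp [Ggamma, SimpleGraph.fromRel_adj]) ?_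
        rw [Set.not_nonempty_iff_eq_empty]
        exact hIcc _ _ _ _ (by simp [hL5, hR5]; try linarith) (by simp [hL5, hR5]; try linarith) (by simp [hL5, hR5]; try linarith)
      · refine iff_of_false (by simp [Ggamma, SimpleGraph.fromRel_adj]) ?_
        rw [Set.not_nonempty_iff_eq_empty]
        exact hIcc _ _ _ _ (by simp [hL5, hR5]; try linarith) (by simp [hL5, hR5]; try linarith) (by simp [hL5, hR5]; try linarith)
      · refine iff_of_true (by simp [Ggamma, SimpleGraph.fromRel_adj]) ?_
        exact ⟨m-3, by simp [hL5, hR5]; constructor <;> linarith⟩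
      · exact absurd rfl hxy
      · refine iff_of_false (by simp [Ggamma, SimpleGraph.fromRel_adj]) ?_
        rw [Set.not_nonempty_iff_eq_empty]
        exact hIcc _ _ _ _ (by simp [hL5, hR5]; try linarith) (by simp [hL5, hR5]; try linarith) (by simp [hL5, hR5]; try linarith)
      · refine iff_of_false (by simp [Ggamma, SimpleGraph.fromRel_adj]) ?_
        rw [Set.not_nonempty_iff_eq_empty]
        exact hIcc _ _ _ _ (by simp [hL5, hR5]; try linarith) (by simp [hL5, hR5]; try linarith) (by simp [hL5, hR5]; try linarith)
      · refine iff_of_false (by simp [Ggamma, SimpleGraph.fromRel_adj]) ?_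
        rw [Set.not_nonempty_iff_eq_empty]
        rw [inter_comm]
        exact hIcc _ _ _ _ (by simp [hL5, hR5]; try linarith) (by simp [hL5, hR5]; try linarith) (by simp [hL5, hR5]; try linarith)
      · refine iff_of_true (by simp [Ggamma, SimpleGraph.fromRel_adj]) ?_
        exact ⟨M+2, by simp [hL5, hR5]; constructor <;> linarith⟩
      · refine iff_of_false (by simp [Ggamma, SimpleGraph.fromRel_adj]) ?_
        rw [Set.not_nonempty_iff_eq_empty]
        rw [inter_comm]
        exact hIcc _ _ _ _ (by simp [hL5, hR5]; try linarith) (by simp [hL5, hR5]; try linarith) (by simp [hL5, hR5]; try linarith)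
      · refine iff_of_false (by simp [Ggamma, SimpleGraph.fromRel_adj]) ?_
        rw [Set.not_nonempty_iff_eq_empty]
        rw [inter_comm]
        exact hIcc _ _ _ _ (by simp [hL5, hR5]; try linarith) (by simp [hL5, hR5]; try linarith) (by simp [hL5, hR5]; try linarith)
      · exact absurd rfl hxy
      · refine iff_of_true (by simp [Ggamma, SimpleGraph.fromRel_adj]) ?_
        exact ⟨M+3, by simp [hL5, hR5]; constructor <;> linarith⟩
      · refine iff_of_false (by simp [Ggamma, SimpleGraph.fromRel_adj]) ?_
        rw [Set.not_nonempty_iff_eq_empty]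
        rw [inter_comm]
        exact hIcc _ _ _ _ (by simp [hL5, hR5]; try linarith) (by simp [hL5, hR5]; try linarith) (by simp [hL5, hR5]; try linarith)
      · refine iff_of_false (by simp [Ggamma, SimpleGraph.fromRel_adj]) ?_
        rw [Set.not_nonempty_iff_eq_empty]
        rw [inter_comm]
        exact hIcc _ _ _ _ (by simp [hL5, hR5]; try linarith) (by simp [hL5, hR5]; try linarith) (by simp [hL5, hR5]; try linarith)
      · refine iff_of_false (by simp [Ggamma, SimpleGraph.fromRel_adj]) ?_
        rw [Set.not_nonempty_iff_eq_empty]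
        rw [inter_comm]
        exact hIcc _ _ _ _ (by simp [hL5, hR5]; try linarith) (by simp [hL5, hR5]; try linarith) (by simp [hL5, hR5]; try linarith)
      · refine iff_of_false (by simp [Ggamma, SimpleGraph.fromRel_adj]) ?_
        rw [Set.not_nonempty_iff_eq_empty]
        rw [inter_comm]
        exact hIcc _ _ _ _ (by simp [hL5, hR5]; try linarith) (by simp [hL5, hR5]; try linarith) (by simp [hL5, hR5]; try linarith)
      · refine iff_of_true (by simp [Ggamma, SimpleGraph.fromRel_adj]) ?_
        exact ⟨M+3, by simp [hL5, hR5]; constructor <;> linarith⟩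
      · exact absurd rfl hxy

def chainSet (R : IntervalRep G) : Set ℕ :=
  {k : ℕ | ∃ f : Fin k → V, ∀ i j : Fin k, i < j → R.itv (f i) ⊂ R.itv (f j)}

lemma zero_mem_chainSet (R : IntervalRep G) : 0 ∈ chainSet R :=
  ⟨Fin.elim0, fun i => i.elim0⟩

lemma chainSet_bddAbove [Fintype V] (R : IntervalRep G) : BddAbove (chainSet R) := by
  refine ⟨Fintype.card V, fun k hk => ?_⟩
  obtain ⟨f, hf⟩ := hk
  have hinj : Function.Injective f := by
    intro i j hij
    by_contra hne
    rcases lt_or_gt_of_ne (fun h : i = j => hne h) with h | h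
    · exact (hf i j h).ne (by rw [hij])
    · exact (hf j i h).ne (by rw [hij])
  simpa using Fintype.card_le_of_injective f hinj

lemma le_nesting [Fintype V] (R : IntervalRep G) {k : ℕ} (hk : k ∈ chainSet R) :
    k ≤ R.nesting := le_csSup (chainSet_bddAbove R) hk

lemma nesting_le (R : IntervalRep G) {n : ℕ} (h : ∀ k ∈ chainSet R, k ≤ n) :
    R.nesting ≤ n := csSup_le ⟨0, zero_mem_chainSet R⟩ h

lemma exists_nesting_chain [Fintype V] (R : IntervalRep G) : R.nesting ∈ chainSet R :=
  Nat.sSup_mem ⟨0, zero_mem_chainSet R⟩ (chainSet_bddAbove R)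

lemma gammaRep_chain_bound [Fintype V] (R : IntervalRep G) (m M : ℝ)
    (hm : ∀ v, m ≤ R.l v) (hM : ∀ v, R.r v ≤ M) (hmM : m ≤ M) :
    (gammaRep R m M hm hM hmM).nesting ≤ R.nesting + 1 := by
  set R' := gammaRep R m M hm hM hmM with hR'
  apply nesting_le
  rintro k ⟨f, hf⟩
  rcases Nat.lt_or_ge k 2 with hk2 | hk2
  · have : R.nesting + 1 ≥ 1 := by omega
    omega
  have key1 : ∀ (i : Fin 6) (y : V ⊕ Fin 6), ¬ (R'.itv (Sum.inr i) ⊂ R'.itv y) := by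
    intro i y h
    have h1 : R'.l (Sum.inr i) ∈ R'.itv y := h.subset ⟨le_refl _, R'.le _⟩
    have h2 : R'.r (Sum.inr i) ∈ R'.itv y := h.subset ⟨R'.le _, le_refl _⟩
    have hL5 : (![m-2, m, m-3, m-4, M+2, M+3] : Fin 6 → ℝ) 5 = M+3 := rfl
    have hR5 : (![M, M+2, m-2, m-3, M+3, M+4] : Fin 6 → ℝ) 5 = M+4 := rfl
    rcases y with w | j
    · have e1 := hm w; have e2 := hM w; have e3 := R.le w
      fin_cases i <;>
        simp [IntervalRep.itv, hR', gammaRep, hL5, hR5, Set.mem_Icc] at h1 h2 <;>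
        linarith
    · rcases eq_or_ne i j with rfl | hij
      · exact h.ne rfl
      · fin_cases i <;> fin_cases j <;>
          first
          | exact hij rfl
          | (simp [IntervalRep.itv, hR', gammaRep, hL5, hR5, Set.mem_Icc] at h1 h2 <;>
             linarith)
  have hinl : ∀ i : Fin (k-1), ∃ w, f ⟨i.val, by omega⟩ = Sum.inl w := by
    intro i
    have hlt : (⟨i.val, by omega⟩ : Fin k) < ⟨i.val + 1, by omega⟩ :=
      Fin.mk_lt_mk.mpr (by omega)
    have := hf _ _ hlt
    rcases hfi : f ⟨i.val, by omega⟩ with w | j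
    · exact ⟨w, rfl⟩
    · rw [hfi] at this
      exact absurd this (key1 _ _)
  choose g hg using hinl
  have hgchain : k - 1 ∈ chainSet R := by
    refine ⟨g, fun i j hij => ?_⟩
    have hlt : (⟨i.val, by omega⟩ : Fin k) < ⟨j.val, by omega⟩ :=
      Fin.mk_lt_mk.mpr (Fin.lt_def.mp hij)
    have := hf _ _ hlt
    rw [hg i, hg j] at this
    exact this
  have := le_nesting R hgchain
  omega

lemma Icc_disjoint_order {a b c d : ℝ} (hab : a ≤ b) (hcd : c ≤ d)
    (h : Icc a b ∩ Icc c d = ∅) : b < c ∨ d < a := by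
  by_contra h'
  push_neg at h'
  have : max a c ∈ Icc a b ∩ Icc c d :=
    ⟨⟨le_max_left _ _, max_le hab h'.1⟩, ⟨le_max_right _ _, max_le h'.2 hcd⟩⟩
  rw [h] at this
  exact this

lemma core {s t p q a a' b b' c c' d d' x1 x2 x3 x4 x5 : ℝ}
    (h1 : s ≤ x1) (h1' : x1 ≤ t) (h1p : p ≤ x1) (h1q : x1 ≤ q)
    (h2 : a ≤ x2) (h2' : x2 ≤ a') (h2p : p ≤ x2) (h2q : x2 ≤ q)
    (h3 : b ≤ x3) (h3' : x3 ≤ b') (h3p : p ≤ x3) (h3q : x3 ≤ q)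
    (h4 : c ≤ x4) (h4' : x4 ≤ c') (h4a : a ≤ x4) (h4a' : x4 ≤ a')
    (h5 : d ≤ x5) (h5' : x5 ≤ d') (h5b : b ≤ x5) (h5b' : x5 ≤ b')
    (hAJ : a' < s ∨ t < a) (hBJ : b' < s ∨ t < b)
    (hAB : a' < b ∨ b' < a) (hA2 : c' < p ∨ q < c) (hB2 : d' < p ∨ q < d) :
    p ≤ s ∧ t ≤ q ∧ (p < s ∨ t < q) := by
  rcases hAJ with hAJ | hAJ <;> rcases hBJ with hBJ | hBJ <;>
    rcases hAB with hAB | hAB <;> rcases hA2 with hA2 | hA2 <;> rcases hB2 with hB2 | hB2 <;>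
    refine ⟨by linarith, by linarith, ?_⟩ <;>
    first
      | (left; linarith)
      | (right; linarith)

lemma alpha_lower [Fintype V] (Rα : IntervalRep (Galpha G)) :
    nu G + 1 ≤ Rα.nesting := by
  classical
  have hitvdummy := 0
  have hitv : ∀ w : V, Rα.itv (Sum.inl w) = (restrictAlpha Rα).itv w := fun _ => rfl
  have h0 : nu G ≤ (restrictAlpha Rα).nesting := Nat.sInf_le ⟨restrictAlpha Rα, rfl⟩
  obtain ⟨f, hf⟩ := exists_nesting_chain (restrictAlpha Rα)
  rcases Nat.eq_zero_or_pos (restrictAlpha Rα).nesting with hz | hpos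
  · have h1 : 1 ∈ chainSet Rα :=
      ⟨fun _ => Sum.inr 0, fun i j hij => absurd (Fin.lt_def.mp hij) (by omega)⟩
    have := le_nesting Rα h1
    omega
  · have meet : ∀ (x y : V ⊕ Fin 5), x ≠ y → (Galpha G).Adj x y →
        ∃ z, Rα.l x ≤ z ∧ z ≤ Rα.r x ∧ Rα.l y ≤ z ∧ z ≤ Rα.r y := by
      intro x y hxy h
      obtain ⟨z, ⟨hz1, hz2⟩, hz3, hz4⟩ := (Rα.adj_iff x y hxy).mp h
      exact ⟨z, hz1, hz2, hz3, hz4⟩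
    have hempty : ∀ (x y : V ⊕ Fin 5), x ≠ y → ¬(Galpha G).Adj x y →
        Rα.r x < Rα.l y ∨ Rα.r y < Rα.l x := by
      intro x y hxy h
      have hemp : Icc (Rα.l x) (Rα.r x) ∩ Icc (Rα.l y) (Rα.r y) = ∅ :=
        not_nonempty_iff_eq_empty.mp (fun hn => h ((Rα.adj_iff x y hxy).mpr hn))
      exact Icc_disjoint_order (Rα.le x) (Rα.le y) hemp
    obtain ⟨x1, hx1a, hx1b, hx1c, hx1d⟩ := meet (Sum.inl (f ⟨(restrictAlpha Rα).nesting-1, by omega⟩)) (Sum.inr 0)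
      (by simp) (by simp [Galpha, SimpleGraph.fromRel_adj])
    obtain ⟨x2, hx2a, hx2b, hx2c, hx2d⟩ := meet (Sum.inr 1) (Sum.inr 0) (by simp)
      (by simp [Galpha, SimpleGraph.fromRel_adj])
    obtain ⟨x3, hx3a, hx3b, hx3c, hx3d⟩ := meet (Sum.inr 3) (Sum.inr 0) (by simp)
      (by simp [Galpha, SimpleGraph.fromRel_adj])
    obtain ⟨x4, hx4a, hx4b, hx4c, hx4d⟩ := meet (Sum.inr 2) (Sum.inr 1) (by simp)
      (by simp [Galpha, SimpleGraph.fromRel_adj])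
    obtain ⟨x5, hx5a, hx5b, hx5c, hx5d⟩ := meet (Sum.inr 4) (Sum.inr 3) (by simp)
      (by simp [Galpha, SimpleGraph.fromRel_adj])
    have hAJ := hempty (Sum.inr 1) (Sum.inl (f ⟨(restrictAlpha Rα).nesting-1, by omega⟩)) (by simp)
      (by simp [Galpha, SimpleGraph.fromRel_adj])
    have hBJ := hempty (Sum.inr 3) (Sum.inl (f ⟨(restrictAlpha Rα).nesting-1, by omega⟩)) (by simp)
      (by simp [Galpha, SimpleGraph.fromRel_adj])
    have hAB := hempty (Sum.inr 1) (Sum.inr 3) (by simp)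
      (by simp [Galpha, SimpleGraph.fromRel_adj])
    have hA2 := hempty (Sum.inr 2) (Sum.inr 0) (by simp)
      (by simp [Galpha, SimpleGraph.fromRel_adj])
    have hB2 := hempty (Sum.inr 4) (Sum.inr 0) (by simp)
      (by simp [Galpha, SimpleGraph.fromRel_adj])
    obtain ⟨hps, htq, hstrict⟩ := core hx1a hx1b hx1c hx1d hx2a hx2b hx2c hx2d
      hx3a hx3b hx3c hx3d hx4a hx4b hx4c hx4d hx5a hx5b hx5c hx5d
      (hAJ.imp id id) (hBJ.imp id id) (hAB.imp id id) (hA2.imp id id) (hB2.imp id id)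
    have hJU : Rα.itv (Sum.inl (f ⟨(restrictAlpha Rα).nesting-1, by omega⟩)) ⊂ Rα.itv (Sum.inr 0) := by
      rw [IntervalRep.itv, IntervalRep.itv,
        Set.ssubset_iff_of_subset (Icc_subset_Icc hps htq)]
      rcases hstrict with h | h
      · exact ⟨Rα.l (Sum.inr 0), ⟨le_refl _, Rα.le _⟩, fun hmem => absurd hmem.1 (not_le.mpr h)⟩
      · exact ⟨Rα.r (Sum.inr 0), ⟨Rα.le _, le_refl _⟩, fun hmem => absurd hmem.2 (not_le.mpr h)⟩
    have hchain : (restrictAlpha Rα).nesting + 1 ∈ chainSet Rα := by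
      refine ⟨Fin.snoc (fun i => Sum.inl (f i)) (Sum.inr 0), fun i j hij => ?_⟩
      rcases Fin.eq_castSucc_or_eq_last j with ⟨j', rfl⟩ | rfl
      · rcases Fin.eq_castSucc_or_eq_last i with ⟨i', rfl⟩ | rfl
        · simp only [Fin.snoc_castSucc]
          rw [hitv, hitv]
          exact hf i' j' (Fin.castSucc_lt_castSucc_iff.mp hij)
        · have h1 := Fin.lt_def.mp hij
          rw [Fin.val_last, Fin.coe_castSucc] at h1
          exact absurd h1 (by have := j'.isLt; omega)
      · rcases Fin.eq_castSucc_or_eq_last i with ⟨i', rfl⟩ | rfl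
        · simp only [Fin.snoc_castSucc, Fin.snoc_last]
          rcases Nat.lt_or_ge i'.val ((restrictAlpha Rα).nesting-1) with hi | hi
          · have step := hf i' ⟨(restrictAlpha Rα).nesting-1, by omega⟩ (Fin.lt_def.mpr (by simpa using hi))
            refine HasSSubset.SSubset.trans ?_ hJU
            rw [hitv, hitv]
            exact step
          · have hieq : i' = ⟨(restrictAlpha Rα).nesting-1, by omega⟩ := Fin.ext (by have := i'.isLt; simp; omega)
            rw [hieq]
            exact hJU
        · exact absurd hij (lt_irrefl _)
    have := le_nesting Rα hchain
    omega

end Stmt6Aux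

/-- `ν(G_γ) ≤ ν(G_α)`. -/
theorem stmt_6 {V : Type*} [Fintype V] (G : SimpleGraph V) (hG : IsIntervalGraph G) :
    nu (Ggamma G) ≤ nu (Galpha G) := by
  obtain ⟨R⟩ := hG
  have bounds : ∀ (S : IntervalRep G), ∃ m M : ℝ,
      (∀ v, m ≤ S.l v) ∧ (∀ v, S.r v ≤ M) ∧ m ≤ M := by
    intro S
    obtain ⟨m0, hm0⟩ := (Set.finite_range S.l).bddBelow
    obtain ⟨M0, hM0⟩ := (Set.finite_range S.r).bddAbove
    exact ⟨min m0 M0, max m0 M0, fun v => le_trans (min_le_left _ _) (hm0 ⟨v, rfl⟩),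
      fun v => le_trans (hM0 ⟨v, rfl⟩) (le_max_right _ _), min_le_max⟩
  obtain ⟨m1, M1, hm1, hM1, hmM1⟩ := bounds R
  have hANE : {n : ℕ | ∃ Rα : IntervalRep (Galpha G), Rα.nesting = n}.Nonempty :=
    ⟨_, alphaRep R m1 M1 hm1 hM1 hmM1, rfl⟩
  obtain ⟨Rα, hRα⟩ := Nat.sInf_mem hANE
  obtain ⟨Rop, hRop⟩ := Nat.sInf_mem
    (⟨_, R, rfl⟩ : {n : ℕ | ∃ S : IntervalRep G, S.nesting = n}.Nonempty)
  obtain ⟨m2, M2, hm2, hM2, hmM2⟩ := bounds Rop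
  have h1 : nu (Ggamma G) ≤ (gammaRep Rop m2 M2 hm2 hM2 hmM2).nesting :=
    Nat.sInf_le ⟨_, rfl⟩
  have h2 := gammaRep_chain_bound Rop m2 M2 hm2 hM2 hmM2
  have h3 := alpha_lower (G := G) Rα
  calc nu (Ggamma G) ≤ Rop.nesting + 1 := le_trans h1 h2
    _ = nu G + 1 := by rw [hRop]; rfl
    _ ≤ Rα.nesting := h3
    _ = nu (Galpha G) := hRα
end

section
/- For every interval graph G, there exists an interval representation R of G_γ with ν(R) = ν(G_γ) such that the restriction of R to the vertices of G is an interval representation of G with nesting exactly ν(G). -/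
open Set

/-! ### Auxiliary machinery -/

section Aux

variable {V : Type*} {G : SimpleGraph V}

namespace IntervalRep

lemma itv_ne (R : IntervalRep G) (v : V) : (R.itv v).Nonempty :=
  nonempty_Icc.2 (R.le v)

/-- The set of lengths of strictly nested chains. -/
def chainSet (R : IntervalRep G) : Set ℕ :=
  {k : ℕ | ∃ f : Fin k → V, ∀ i j : Fin k, i < j → R.itv (f i) ⊂ R.itv (f j)}

lemma nesting_def (R : IntervalRep G) : R.nesting = sSup R.chainSet := rfl

lemma zero_mem_chainSet (R : IntervalRep G) : 0 ∈ R.chainSet :=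
  ⟨Fin.elim0, fun i => i.elim0⟩

lemma chainSet_le_card [Fintype V] (R : IntervalRep G) {k : ℕ} (hk : k ∈ R.chainSet) :
    k ≤ Fintype.card V := by
  obtain ⟨f, hf⟩ := hk
  have hinj : Function.Injective f := by
    intro i j hij
    by_contra hne
    rcases lt_or_gt_of_ne (fun h : i = j => hne h) with h | h
    · exact (hf i j h).ne (congrArg R.itv hij)
    · exact (hf j i h).ne (congrArg R.itv hij.symm)
  simpa using Fintype.card_le_of_injective f hinj

lemma bddAbove_chainSet [Fintype V] (R : IntervalRep G) : BddAbove R.chainSet :=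
  ⟨Fintype.card V, fun _ hk => R.chainSet_le_card hk⟩

lemma le_nesting [Fintype V] (R : IntervalRep G) {k : ℕ} (hk : k ∈ R.chainSet) :
    k ≤ R.nesting :=
  le_csSup R.bddAbove_chainSet hk

lemma nesting_le (R : IntervalRep G) {n : ℕ} (h : ∀ k ∈ R.chainSet, k ≤ n) :
    R.nesting ≤ n :=
  csSup_le ⟨0, R.zero_mem_chainSet⟩ h

lemma nesting_mem_chainSet [Fintype V] (R : IntervalRep G) : R.nesting ∈ R.chainSet :=
  Nat.sSup_mem ⟨0, R.zero_mem_chainSet⟩ R.bddAbove_chainSet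

end IntervalRep

lemma Ggamma_adj_inl_inl {a b : V} (hab : a ≠ b) :
    (Ggamma G).Adj (Sum.inl a) (Sum.inl b) ↔ G.Adj a b := by
  rw [Ggamma, SimpleGraph.fromRel_adj]
  constructor
  · rintro ⟨-, h | h⟩
    · exact h
    · exact h.symm
  · intro h
    exact ⟨by simpa using hab, Or.inl h⟩

/-- Restriction of a representation of `G_γ` to the vertices of `G`. -/
def IntervalRep.restrict (R : IntervalRep (Ggamma G)) : IntervalRep G where
  l v := R.l (Sum.inl v)
  r v := R.r (Sum.inl v)
  le v := R.le _
  adj_iff a b hab := by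
    rw [← Ggamma_adj_inl_inl hab]
    exact R.adj_iff _ _ (by simpa using hab)

lemma restrict_nesting_le [Fintype V] (R : IntervalRep (Ggamma G)) :
    R.restrict.nesting ≤ R.nesting := by
  apply IntervalRep.nesting_le
  rintro k ⟨f, hf⟩
  exact R.le_nesting ⟨fun i => Sum.inl (f i), fun i j hij => hf i j hij⟩

/-! ### The extension construction -/

def newl (m M : ℝ) : Fin 6 → ℝ
  | 0 => m-2 | 1 => m-1 | 2 => m-4 | 3 => m-5 | 4 => M+2 | 5 => M+3
def newr (m M : ℝ) : Fin 6 → ℝ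
  | 0 => M+1 | 1 => M+2 | 2 => m-2 | 3 => m-3 | 4 => M+4 | 5 => M+5

lemma inter_nonempty_iff {a b c d : ℝ} (hab : a ≤ b) (hcd : c ≤ d) :
    (Icc a b ∩ Icc c d).Nonempty ↔ (c ≤ b ∧ a ≤ d) := by
  rw [Icc_inter_Icc, nonempty_Icc, sup_le_iff]
  simp only [le_inf_iff]
  constructor
  · rintro ⟨⟨h1, h2⟩, h3, h4⟩; exact ⟨h3, h2⟩
  · rintro ⟨h1, h2⟩; exact ⟨⟨hab, h2⟩, h1, hcd⟩

variable (R : IntervalRep G) (m M : ℝ) (hm0 : m ≤ 0) (h0M : 0 ≤ M)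
  (hl : ∀ v, m ≤ R.l v) (hr : ∀ v, R.r v ≤ M)

def extAux : IntervalRep (Ggamma G) where
  l := Sum.elim R.l (newl m M)
  r := Sum.elim R.r (newr m M)
  le x := by
    rcases x with v | i
    · exact R.le v
    · fin_cases i <;> simp [newl, newr] <;> linarith
  adj_iff x y hxy := by
    have key : ∀ (a : V) (j : Fin 6),
        ((j = 0 ∨ j = 1) ↔
          (Icc (R.l a) (R.r a) ∩ Icc (newl m M j) (newr m M j)).Nonempty) := by
      intro a j
      have h1 := hl a; have h2 := hr a; have h3 := R.le a
      fin_cases j <;>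
        rw [show (Icc _ _ ∩ _) = _ from rfl] <;>
        simp only [newl, newr] <;>
        rw [inter_nonempty_iff h3 (by linarith)] <;>
        simp <;>
        first
          | (constructor <;> linarith)
          | (rintro ⟨p1, p2⟩; linarith)
          | (intro p1 p2; linarith)
          | (intro p1; linarith)
          | linarith
    rcases x with a | i <;> rcases y with b | j
    · rw [Ggamma_adj_inl_inl (by simpa using hxy)]
      exact R.adj_iff a b (by simpa using hxy)
    · rw [Ggamma, SimpleGraph.fromRel_adj]
      simp only [Sum.elim_inl, Sum.elim_inr]
      rw [← key a j]
      constructor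
      · rintro ⟨-, h | h⟩
        · exact h
        · exact h.elim
      · intro h; exact ⟨hxy, Or.inl h⟩
    · rw [Ggamma, SimpleGraph.fromRel_adj]
      simp only [Sum.elim_inl, Sum.elim_inr]
      rw [Set.inter_comm, ← key b i]
      constructor
      · rintro ⟨-, h | h⟩
        · exact h.elim
        · exact h
      · intro h; exact ⟨hxy, Or.inr h⟩
    · rw [Ggamma, SimpleGraph.fromRel_adj]
      simp only [Sum.elim_inr]
      have hij : i ≠ j := fun h => hxy (by rw [h])
      fin_cases i <;> fin_cases j <;>
        first
          | (exact absurd rfl hij)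
          | (simp only [newl, newr]
             rw [inter_nonempty_iff (by linarith) (by linarith)]
             constructor
             · intro h
               first
                 | (exact absurd h.2 (by decide))
                 | (constructor <;> linarith)
             · intro h
               first
                 | (exact ⟨hxy, by decide⟩)
                 | (exfalso; rcases h with ⟨hp1, hp2⟩; linarith))

lemma Icc_ssubset {a b c d : ℝ} (h1 : c < a) (h2 : a ≤ b) (h3 : b < d) :
    Icc a b ⊂ Icc c d := by
  refine (ssubset_iff_of_subset (Icc_subset_Icc h1.le h3.le)).2
    ⟨c, ⟨le_rfl, by linarith⟩, fun hc => by linarith [hc.1]⟩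

lemma not_Icc_ssubset {a b c d : ℝ} (hab : a ≤ b) (h : ¬(c ≤ a ∧ b ≤ d)) :
    ¬ Icc a b ⊂ Icc c d :=
  fun hs => h ((Icc_subset_Icc_iff hab).1 hs.subset)

lemma extAux_inl_ssubset (v : V) (t : Fin 6) (ht : t = 0 ∨ t = 1) :
    (extAux R m M hm0 h0M hl hr).itv (Sum.inl v) ⊂
      (extAux R m M hm0 h0M hl hr).itv (Sum.inr t) := by
  have h1 := hl v; have h2 := hr v; have h3 := R.le v
  rcases ht with rfl | rfl <;>
    exact Icc_ssubset (by simp [extAux, newl]; linarith) h3 (by simp [extAux, newr]; linarith)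

lemma extAux_not_ssubset_inr (t : Fin 6) (x : V ⊕ Fin 6) :
    ¬ (extAux R m M hm0 h0M hl hr).itv (Sum.inr t) ⊂
      (extAux R m M hm0 h0M hl hr).itv x := by
  rcases x with v | s
  · have h1 := hl v; have h2 := hr v; have h3 := R.le v
    fin_cases t <;>
      refine not_Icc_ssubset (by simp [extAux, newl, newr]; linarith) ?_ <;>
      · rintro ⟨u1, u2⟩
        simp [extAux, newl, newr] at u1 u2
        all_goals linarith
  · fin_cases t <;> fin_cases s <;>
      first
        | exact ssubset_irrefl _
        | (refine not_Icc_ssubset (by simp [extAux, newl, newr]; linarith) ?_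
           rintro ⟨u1, u2⟩
           simp [extAux, newl, newr] at u1 u2
           all_goals linarith)

lemma extAux_nesting [Fintype V] :
    (extAux R m M hm0 h0M hl hr).nesting = R.nesting + 1 := by
  apply le_antisymm
  · apply IntervalRep.nesting_le
    rintro k ⟨f, hf⟩
    rcases Nat.eq_zero_or_pos k with hk | hk
    · omega
    have hinl : ∀ i : Fin k, i.val < k - 1 → ∃ v : V, f i = Sum.inl v := by
      intro i hi
      rcases hfi : f i with v | t
      · exact ⟨v, rfl⟩
      · exfalso
        have hch := hf i ⟨k-1, by omega⟩ (by simp only [Fin.lt_def]; exact hi)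
        rw [hfi] at hch
        exact extAux_not_ssubset_inr R m M hm0 h0M hl hr t _ hch
    choose g hg using fun (i : Fin (k-1)) => hinl ⟨i.val, by omega⟩ (i.isLt)
    have hmem : k - 1 ∈ R.chainSet := by
      refine ⟨g, fun i j hij => ?_⟩
      have hch := hf ⟨i.val, by omega⟩ ⟨j.val, by omega⟩ hij
      rw [hg i, hg j] at hch
      exact hch
    have := R.le_nesting hmem
    omega
  · obtain ⟨f, hf⟩ := R.nesting_mem_chainSet
    apply IntervalRep.le_nesting
    refine ⟨fun i => if h : i.val < R.nesting then Sum.inl (f ⟨i.val, h⟩) else Sum.inr 0,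
      fun i j hij => ?_⟩
    by_cases hj : j.val < R.nesting
    · have hi : i.val < R.nesting := lt_trans hij hj
      simp only [dif_pos hi, dif_pos hj]
      exact hf _ _ hij
    · have hi : i.val < R.nesting := by
        have h1 : j.val < R.nesting + 1 := j.isLt
        have h2 : i.val < j.val := hij
        omega
      simp only [dif_pos hi, dif_neg hj]
      exact extAux_inl_ssubset R m M hm0 h0M hl hr (f ⟨i.val, hi⟩) 0 (Or.inl rfl)

end Aux

/-- there is a representation `R` of `G_γ` with `ν(R) = ν(G_γ)` whose
restriction to the vertices of `G` is a representation of `G` of nesting exactly `ν(G)`. -/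
theorem stmt_10 {V : Type*} [Fintype V] (G : SimpleGraph V) (hG : IsIntervalGraph G) :
    ∃ R : IntervalRep (Ggamma G), R.nesting = nu (Ggamma G) ∧
      ∃ R' : IntervalRep G,
        (∀ v : V, R'.l v = R.l (Sum.inl v) ∧ R'.r v = R.r (Sum.inl v)) ∧
        R'.nesting = nu G := by
  classical
  obtain ⟨R0⟩ := hG
  have hne : {n : ℕ | ∃ R : IntervalRep G, R.nesting = n}.Nonempty := ⟨R0.nesting, R0, rfl⟩
  obtain ⟨Ropt, hRopt⟩ : ∃ R : IntervalRep G, R.nesting = nu G := Nat.sInf_mem hne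
  set m : ℝ := sInf (insert 0 (Set.range Ropt.l)) with hm
  set M : ℝ := sSup (insert 0 (Set.range Ropt.r)) with hM
  have hfinl : (insert (0:ℝ) (Set.range Ropt.l)).Finite := (Set.finite_range _).insert 0
  have hfinr : (insert (0:ℝ) (Set.range Ropt.r)).Finite := (Set.finite_range _).insert 0
  have hm0 : m ≤ 0 := csInf_le hfinl.bddBelow (Set.mem_insert _ _)
  have h0M : (0:ℝ) ≤ M := le_csSup hfinr.bddAbove (Set.mem_insert _ _)
  have hl : ∀ v, m ≤ Ropt.l v := fun v =>
    csInf_le hfinl.bddBelow (Set.mem_insert_of_mem _ ⟨v, rfl⟩)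
  have hr : ∀ v, Ropt.r v ≤ M := fun v =>
    le_csSup hfinr.bddAbove (Set.mem_insert_of_mem _ ⟨v, rfl⟩)
  set E := extAux Ropt m M hm0 h0M hl hr with hE
  have hEnest : E.nesting = nu G + 1 := by
    rw [hE, extAux_nesting, hRopt]
  have hneg : {n : ℕ | ∃ R : IntervalRep (Ggamma G), R.nesting = n}.Nonempty :=
    ⟨E.nesting, E, rfl⟩
  obtain ⟨Rg, hRg⟩ : ∃ R : IntervalRep (Ggamma G), R.nesting = nu (Ggamma G) :=
    Nat.sInf_mem hneg
  have low : nu G ≤ nu (Ggamma G) := by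
    calc nu G ≤ Rg.restrict.nesting := Nat.sInf_le ⟨Rg.restrict, rfl⟩
      _ ≤ Rg.nesting := restrict_nesting_le Rg
      _ = nu (Ggamma G) := hRg
  have high : nu (Ggamma G) ≤ nu G + 1 := by
    have hmem : E.nesting ∈ {n : ℕ | ∃ R : IntervalRep (Ggamma G), R.nesting = n} := ⟨E, rfl⟩
    have h := Nat.sInf_le hmem
    rw [hEnest] at h
    exact h
  by_cases hc : nu (Ggamma G) = nu G + 1
  · exact ⟨E, by rw [hEnest, hc], Ropt, fun v => ⟨rfl, rfl⟩, hRopt⟩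
  · have heq : nu (Ggamma G) = nu G := by omega
    refine ⟨Rg, hRg, Rg.restrict, fun v => ⟨rfl, rfl⟩, ?_⟩
    have h1 : nu G ≤ Rg.restrict.nesting := Nat.sInf_le ⟨Rg.restrict, rfl⟩
    have h2 : Rg.restrict.nesting ≤ Rg.nesting := restrict_nesting_le Rg
    omega
end
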